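/- Consider the integral program P: maximize ∑_{j,i} d_{ij} x_{ij} over x_{ij} ∈ {0,1} with constraints ∑_j g_{ij} x_{ij} ≤ B_i for each i ∈ [M] and ∑_i x_{ij} ≤ 1 for each j, and its LP relaxation R with x_{ij} ∈ [0,1]. Then any basic optimal solution of R has at most M fractional-support queries (queries j for which some x_{ij} ∈ (0,1)), and hence the integrality gap satisfies opt(R) − opt(P) ≤ M·s_max, where s_max = max_{i,j} d_{ij}. -/

import Mathlib

open Finset

noncomputable def extFun {α β : Type*} [DecidableEq α] [DecidableEq β]
    (S : Finset (α × β)) (u : ↥S → ℝ) (i : α) (j : β) : ℝ :=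
  if h : (i, j) ∈ S then u ⟨(i, j), h⟩ else 0

theorem aux_kernel {α β : Type*} [Fintype α] [Fintype β] [DecidableEq α] [DecidableEq β]
    (g : α → β → ℝ) (S : Finset (α × β)) (TB : Finset α) (F2 : Finset β)
    (hlt : TB.card + F2.card < S.card) :
    ∃ v : α → β → ℝ, v ≠ 0 ∧ (∀ p : α × β, p ∉ S → v p.1 p.2 = 0) ∧
      (∀ i ∈ TB, ∑ j, g i j * v i j = 0) ∧ (∀ j ∈ F2, ∑ i, v i j = 0) := by
  have hadd : ∀ (u w : ↥S → ℝ) (i : α) (j : β),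
      extFun S (u + w) i j = extFun S u i j + extFun S w i j := by
    intro u w i j; by_cases h : (i, j) ∈ S <;> simp [extFun, h]
  have hsmul : ∀ (c : ℝ) (u : ↥S → ℝ) (i : α) (j : β),
      extFun S (c • u) i j = c * extFun S u i j := by
    intro c u i j; by_cases h : (i, j) ∈ S <;> simp [extFun, h]
  let φ : (↥S → ℝ) →ₗ[ℝ] (↥TB → ℝ) × (↥F2 → ℝ) :=
    { toFun := fun u => (fun i => ∑ j, g i.1 j * extFun S u i.1 j,
        fun j => ∑ i, extFun S u i j.1)
      map_add' := by
        intro u w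
        refine Prod.ext ?_ ?_ <;> funext p <;>
          simp [hadd, mul_add, Finset.sum_add_distrib]
      map_smul' := by
        intro c u
        refine Prod.ext ?_ ?_ <;> funext p <;>
          simp [hsmul, Finset.mul_sum, mul_left_comm] }
  have hninj : ¬ Function.Injective φ := by
    intro hinj
    have := LinearMap.finrank_le_finrank_of_injective hinj
    simp only [Module.finrank_pi, Module.finrank_prod, Fintype.card_coe] at this
    omega
  rw [Function.not_injective_iff] at hninj
  obtain ⟨u1, u2, heq, hne⟩ := hninj
  have hu0 : φ (u1 - u2) = 0 := by rw [map_sub, heq, sub_self]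
  refine ⟨extFun S (u1 - u2), ?_, ?_, ?_, ?_⟩
  · obtain ⟨s, hs⟩ := Function.ne_iff.mp (sub_ne_zero.mpr hne)
    intro h0
    have h1 : extFun S (u1 - u2) s.1.1 s.1.2 = (u1 - u2) s := dif_pos s.2
    rw [h0] at h1
    exact hs (by simpa using h1.symm)
  · intro p hp
    exact dif_neg hp
  · intro i hi
    have h2 : (φ (u1 - u2)).1 ⟨i, hi⟩ = 0 := by rw [hu0]; rfl
    exact h2
  · intro j hj
    have h2 : (φ (u1 - u2)).2 ⟨j, hj⟩ = 0 := by rw [hu0]; rfl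
    exact h2

theorem stmt14 (M : ℕ) (Q : Type*) [Fintype Q]
    (d g : Fin M → Q → ℝ) (B : Fin M → ℝ)
    (hd : ∀ i j, 0 ≤ d i j) (hg : ∀ i j, 0 ≤ g i j)
    (smax optP optR : ℝ)
    (hsmax : IsGreatest {v | ∃ i j, v = d i j} smax)
    (hP : IsGreatest {v | ∃ x : Fin M → Q → ℝ,
      (∀ i j, x i j = 0 ∨ x i j = 1) ∧ (∀ i, ∑ j, g i j * x i j ≤ B i) ∧
      (∀ j, ∑ i, x i j ≤ 1) ∧ v = ∑ j, ∑ i, d i j * x i j} optP)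
    (hR : IsGreatest {v | ∃ x : Fin M → Q → ℝ,
      (∀ i j, x i j ∈ Set.Icc (0:ℝ) 1) ∧ (∀ i, ∑ j, g i j * x i j ≤ B i) ∧
      (∀ j, ∑ i, x i j ≤ 1) ∧ v = ∑ j, ∑ i, d i j * x i j} optR) :
    (∃ x : Fin M → Q → ℝ,
      (∀ i j, x i j ∈ Set.Icc (0:ℝ) 1) ∧ (∀ i, ∑ j, g i j * x i j ≤ B i) ∧
      (∀ j, ∑ i, x i j ≤ 1) ∧ (∑ j, ∑ i, d i j * x i j) = optR ∧
      (({j | ∃ i, x i j ∈ Set.Ioo (0:ℝ) 1} : Set Q).ncard ≤ M)) ∧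
    optR - optP ≤ (M : ℝ) * smax := by
  classical
  obtain ⟨xR, hxR1, hxR2, hxR3, hxR4⟩ := hR.1
  set K : Set (Fin M → Q → ℝ) := {y | (∀ i j, y i j ∈ Set.Icc (0:ℝ) 1) ∧
    (∀ i, ∑ j, g i j * y i j ≤ B i) ∧ (∀ j, ∑ i, y i j ≤ 1) ∧
    (∑ j, ∑ i, d i j * y i j) = optR} with hKdef
  have hKne : K.Nonempty := ⟨xR, hxR1, hxR2, hxR3, hxR4.symm⟩
  have hcontB : ∀ i, Continuous fun y : Fin M → Q → ℝ => ∑ j, g i j * y i j := fun i =>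
    continuous_finset_sum _ fun j _ =>
      continuous_const.mul ((continuous_apply j).comp (continuous_apply i))
  have hcontq : ∀ j, Continuous fun y : Fin M → Q → ℝ => ∑ i, y i j := fun j =>
    continuous_finset_sum _ fun i _ => (continuous_apply j).comp (continuous_apply i)
  have hcontval : Continuous fun y : Fin M → Q → ℝ => ∑ j, ∑ i, d i j * y i j :=
    continuous_finset_sum _ fun j _ => continuous_finset_sum _ fun i _ =>
      continuous_const.mul ((continuous_apply j).comp (continuous_apply i))
  have hKclosed : IsClosed K := by
    have hrw : K = (⋂ i, ⋂ j, (fun y : Fin M → Q → ℝ => y i j) ⁻¹' Set.Icc (0:ℝ) 1) ∩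
        ((⋂ i, {y : Fin M → Q → ℝ | ∑ j, g i j * y i j ≤ B i}) ∩
         ((⋂ j, {y : Fin M → Q → ℝ | ∑ i, y i j ≤ 1}) ∩
          {y : Fin M → Q → ℝ | (∑ j, ∑ i, d i j * y i j) = optR})) := by
      ext y
      simp only [hKdef, Set.mem_setOf_eq, Set.mem_inter_iff, Set.mem_iInter, Set.mem_preimage]
    rw [hrw]
    exact ((isClosed_iInter fun i => isClosed_iInter fun j =>
        isClosed_Icc.preimage ((continuous_apply j).comp (continuous_apply i))).inter
      ((isClosed_iInter fun i => isClosed_le (hcontB i) continuous_const).inter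
       ((isClosed_iInter fun j => isClosed_le (hcontq j) continuous_const).inter
        (isClosed_eq hcontval continuous_const))))
  have hKcomp : IsCompact K := by
    have hC : IsCompact {y : Fin M → Q → ℝ | ∀ i j, y i j ∈ Set.Icc (0:ℝ) 1} := by
      have hrw : {y : Fin M → Q → ℝ | ∀ i j, y i j ∈ Set.Icc (0:ℝ) 1} =
          Set.pi Set.univ (fun _ : Fin M => Set.pi Set.univ fun _ : Q => Set.Icc (0:ℝ) 1) := by
        ext y
        simp only [Set.mem_setOf_eq, Set.mem_pi, Set.mem_univ, forall_true_left]
      rw [hrw]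
      exact isCompact_univ_pi fun _ => isCompact_univ_pi fun _ => isCompact_Icc
    exact hC.of_isClosed_subset hKclosed fun y hy => hy.1
  obtain ⟨x, hx⟩ := hKcomp.extremePoints_nonempty hKne
  rw [mem_extremePoints] at hx
  obtain ⟨hxK, hxext⟩ := hx
  obtain ⟨hxIcc, hxB, hxq, hxval⟩ := hxK
  set S : Finset (Fin M × Q) := Finset.univ.filter (fun p => x p.1 p.2 ∈ Set.Ioo (0:ℝ) 1)
    with hSdef
  set F : Finset Q := Finset.univ.filter (fun j => ∃ i, x i j ∈ Set.Ioo (0:ℝ) 1) with hFdef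
  set F2 : Finset Q := F.filter (fun j => ∑ i, x i j = 1) with hF2def
  set TB : Finset (Fin M) := Finset.univ.filter (fun i => ∑ j, g i j * x i j = B i) with hTBdef
  -- Claim B : S.card ≤ TB.card + F2.card
  have claimB : S.card ≤ TB.card + F2.card := by
    by_contra hlt
    push_neg at hlt
    obtain ⟨v, hvne, hv0, hvTB, hvF2⟩ := aux_kernel g S TB F2 hlt
    have hvF : ∀ j, j ∉ F → ∀ i, v i j = 0 := by
      intro j hj i
      refine hv0 (i, j) ?_
      rw [hSdef, Finset.mem_filter]
      rintro ⟨-, hio⟩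
      exact hj (by rw [hFdef, Finset.mem_filter]; exact ⟨Finset.mem_univ _, ⟨i, hio⟩⟩)
    have hev : ∀ᶠ t : ℝ in nhds 0,
        (∀ i j, (x + t • v) i j ∈ Set.Icc (0:ℝ) 1) ∧
        (∀ i, ∑ j, g i j * (x + t • v) i j ≤ B i) ∧
        (∀ j, ∑ i, (x + t • v) i j ≤ 1) := by
      refine Filter.Eventually.and ?_ (Filter.Eventually.and ?_ ?_)
      · rw [Filter.eventually_all]; intro i
        rw [Filter.eventually_all]; intro j
        show ∀ᶠ t : ℝ in nhds 0, x i j + t * v i j ∈ Set.Icc (0:ℝ) 1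
        by_cases hS : (i, j) ∈ S
        · have hio : x i j ∈ Set.Ioo (0:ℝ) 1 := by
            have h := hS; rw [hSdef, Finset.mem_filter] at h; exact h.2
          have hcont : ContinuousAt (fun t : ℝ => x i j + t * v i j) 0 :=
            (continuous_const.add (continuous_id.mul continuous_const)).continuousAt
          have hmem : Set.Ioo (0:ℝ) 1 ∈ nhds (x i j + 0 * v i j) := by
            refine isOpen_Ioo.mem_nhds ?_; simpa using hio
          exact (hcont.eventually_mem hmem).mono fun t ht => Set.Ioo_subset_Icc_self ht
        · have hv0' : v i j = 0 := hv0 (i, j) hS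
          filter_upwards with t
          rw [hv0', mul_zero, add_zero]; exact hxIcc i j
      · rw [Filter.eventually_all]; intro i
        have hsum : ∀ t : ℝ, ∑ j, g i j * (x + t • v) i j =
            (∑ j, g i j * x i j) + t * ∑ j, g i j * v i j := by
          intro t
          rw [Finset.mul_sum, ← Finset.sum_add_distrib]
          refine Finset.sum_congr rfl fun j _ => ?_
          simp only [Pi.add_apply, Pi.smul_apply, smul_eq_mul]; ring
        by_cases hi : i ∈ TB
        · have htight : ∑ j, g i j * x i j = B i := by
            have h := hi; rw [hTBdef, Finset.mem_filter] at h; exact h.2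
          filter_upwards with t
          rw [hsum, hvTB i hi, mul_zero, add_zero, htight]
        · have hslack : ∑ j, g i j * x i j < B i := by
            refine lt_of_le_of_ne (hxB i) fun h => hi ?_
            rw [hTBdef, Finset.mem_filter]; exact ⟨Finset.mem_univ _, h⟩
          have hcont : ContinuousAt
              (fun t : ℝ => (∑ j, g i j * x i j) + t * ∑ j, g i j * v i j) 0 :=
            (continuous_const.add (continuous_id.mul continuous_const)).continuousAt
          have hmem : Set.Iio (B i) ∈
              nhds ((∑ j, g i j * x i j) + 0 * ∑ j, g i j * v i j) := by
            refine isOpen_Iio.mem_nhds ?_; simpa using hslack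
          refine (hcont.eventually_mem hmem).mono fun t ht => ?_
          rw [hsum]; exact le_of_lt ht
      · rw [Filter.eventually_all]; intro j
        have hsum : ∀ t : ℝ, ∑ i, (x + t • v) i j = (∑ i, x i j) + t * ∑ i, v i j := by
          intro t
          rw [Finset.mul_sum, ← Finset.sum_add_distrib]
          refine Finset.sum_congr rfl fun i _ => ?_
          simp only [Pi.add_apply, Pi.smul_apply, smul_eq_mul]
        by_cases hj : ∑ i, x i j = 1
        · have hv0s : ∑ i, v i j = 0 := by
            by_cases hjF : j ∈ F
            · exact hvF2 j (by rw [hF2def, Finset.mem_filter]; exact ⟨hjF, hj⟩)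
            · exact Finset.sum_eq_zero fun i _ => hvF j hjF i
          filter_upwards with t
          rw [hsum, hv0s, mul_zero, add_zero, hj]
        · have hslack : ∑ i, x i j < 1 := lt_of_le_of_ne (hxq j) hj
          have hcont : ContinuousAt (fun t : ℝ => (∑ i, x i j) + t * ∑ i, v i j) 0 :=
            (continuous_const.add (continuous_id.mul continuous_const)).continuousAt
          have hmem : Set.Iio (1:ℝ) ∈ nhds ((∑ i, x i j) + 0 * ∑ i, v i j) := by
            refine isOpen_Iio.mem_nhds ?_; simpa using hslack
          refine (hcont.eventually_mem hmem).mono fun t ht => ?_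
          rw [hsum]; exact le_of_lt ht
    obtain ⟨ε, hε, hball⟩ := Metric.eventually_nhds_iff.mp hev
    set t0 : ℝ := ε / 2 with ht0def
    have ht0 : 0 < t0 := by positivity
    have hdist : ∀ c : ℝ, |c| = t0 → dist c 0 < ε := by
      intro c hc; rw [Real.dist_eq, sub_zero, hc, ht0def]; linarith
    set Dv : ℝ := ∑ j, ∑ i, d i j * v i j with hDvdef
    have hvalc : ∀ c : ℝ, ∑ j, ∑ i, d i j * (x + c • v) i j = optR + c * Dv := by
      intro c
      have h1 : ∀ j, ∑ i, d i j * (x + c • v) i j =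
          (∑ i, d i j * x i j) + c * ∑ i, d i j * v i j := by
        intro j
        rw [Finset.mul_sum, ← Finset.sum_add_distrib]
        refine Finset.sum_congr rfl fun i _ => ?_
        simp only [Pi.add_apply, Pi.smul_apply, smul_eq_mul]; ring
      rw [Finset.sum_congr rfl fun j _ => h1 j, Finset.sum_add_distrib, ← Finset.mul_sum,
        hxval, hDvdef]
    have hmem1 : ∀ c : ℝ, |c| = t0 → optR + c * Dv ≤ optR := by
      intro c hc
      obtain ⟨h1, h2, h3⟩ := hball (hdist c hc)
      exact hR.2 ⟨x + c • v, h1, h2, h3, (hvalc c).symm⟩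
    have hDv0 : Dv = 0 := by
      have hp := hmem1 t0 (abs_of_pos ht0)
      have hm := hmem1 (-t0) (by rw [abs_neg, abs_of_pos ht0])
      rcases lt_trichotomy Dv 0 with h | h | h
      · exfalso; have := mul_pos ht0 (neg_pos.mpr h); nlinarith
      · exact h
      · exfalso; have := mul_pos ht0 h; nlinarith
    have hyK : ∀ c : ℝ, |c| = t0 → x + c • v ∈ K := by
      intro c hc
      obtain ⟨h1, h2, h3⟩ := hball (hdist c hc)
      refine ⟨h1, h2, h3, ?_⟩
      rw [hvalc c, hDv0, mul_zero, add_zero]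
    have hseg : x ∈ openSegment ℝ (x + (-t0) • v) (x + t0 • v) := by
      refine ⟨1/2, 1/2, by norm_num, by norm_num, by norm_num, ?_⟩
      module
    have hext2 := hxext _ (hyK (-t0) (by rw [abs_neg, abs_of_pos ht0]))
      _ (hyK t0 (abs_of_pos ht0)) hseg
    have h2 := hext2.2
    have hzero : t0 • v = 0 := by
      have h3 := congrArg (fun w => w - x) h2
      simpa [add_sub_cancel_left] using h3
    rcases smul_eq_zero.mp hzero with h | h
    · exact absurd h (ne_of_gt ht0)
    · exact hvne h
  -- Claim A : F.card + F2.card ≤ S.card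
  have hF2F : F2 ⊆ F := by rw [hF2def]; exact Finset.filter_subset _ _
  have claimA : F.card + F2.card ≤ S.card := by
    have hfib : S.card = ∑ j ∈ F, (S.filter fun p => p.2 = j).card := by
      refine Finset.card_eq_sum_card_fiberwise ?_
      intro p hp
      simp only [Finset.mem_coe, hSdef, Finset.mem_filter] at hp
      rw [Finset.mem_coe, hFdef, Finset.mem_filter]
      exact ⟨Finset.mem_univ _, ⟨p.1, hp.2⟩⟩
    have h1 : ∀ j ∈ F, 1 ≤ (S.filter fun p => p.2 = j).card := by
      intro j hj
      rw [hFdef, Finset.mem_filter] at hj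
      obtain ⟨i, hi⟩ := hj.2
      refine Finset.card_pos.mpr ⟨(i, j), ?_⟩
      rw [Finset.mem_filter]
      refine ⟨?_, rfl⟩
      rw [hSdef, Finset.mem_filter]
      exact ⟨Finset.mem_univ _, hi⟩
    have h2 : ∀ j ∈ F2, 2 ≤ (S.filter fun p => p.2 = j).card := by
      intro j hj
      rw [hF2def, Finset.mem_filter] at hj
      obtain ⟨hjF, hjsum⟩ := hj
      have hjF' := hjF
      rw [hFdef, Finset.mem_filter] at hjF'
      obtain ⟨i1, hi1⟩ := hjF'.2
      have hex : ∃ i2, i2 ≠ i1 ∧ 0 < x i2 j := by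
        by_contra hcon
        push_neg at hcon
        have hone : ∑ i, x i j = x i1 j := by
          refine Finset.sum_eq_single i1 (fun i _ hne => ?_)
            (fun h => absurd (Finset.mem_univ i1) h)
          exact le_antisymm (hcon i hne) (hxIcc i j).1
        rw [hone] at hjsum
        exact (ne_of_lt hi1.2) hjsum
      obtain ⟨i2, hne, hpos⟩ := hex
      have hlt1 : x i2 j < 1 := by
        have hpair : ∑ i ∈ ({i1, i2} : Finset (Fin M)), x i j ≤ ∑ i, x i j :=
          Finset.sum_le_sum_of_subset_of_nonneg (Finset.subset_univ _)
            fun i _ _ => (hxIcc i j).1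
        rw [Finset.sum_pair hne.symm, hjsum] at hpair
        linarith [hi1.1]
      have hsubset : ({(i1, j), (i2, j)} : Finset (Fin M × Q)) ⊆
          S.filter fun p => p.2 = j := by
        intro p hp
        rw [Finset.mem_insert, Finset.mem_singleton] at hp
        rcases hp with rfl | rfl
        · rw [Finset.mem_filter]
          refine ⟨?_, rfl⟩
          rw [hSdef, Finset.mem_filter]
          exact ⟨Finset.mem_univ _, hi1⟩
        · rw [Finset.mem_filter]
          refine ⟨?_, rfl⟩
          rw [hSdef, Finset.mem_filter]
          exact ⟨Finset.mem_univ _, ⟨hpos, hlt1⟩⟩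
      calc 2 = ({(i1, j), (i2, j)} : Finset (Fin M × Q)).card := by
            rw [Finset.card_pair (fun h => hne.symm (congrArg Prod.fst h))]
        _ ≤ _ := Finset.card_le_card hsubset
    have hsplit : ∑ j ∈ F, (S.filter fun p => p.2 = j).card =
        (∑ j ∈ F \ F2, (S.filter fun p => p.2 = j).card) +
          ∑ j ∈ F2, (S.filter fun p => p.2 = j).card := (Finset.sum_sdiff hF2F).symm
    have hA1 : (F \ F2).card ≤ ∑ j ∈ F \ F2, (S.filter fun p => p.2 = j).card := by
      rw [Finset.card_eq_sum_ones]
      exact Finset.sum_le_sum fun j hj => h1 j (Finset.mem_sdiff.mp hj).1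
    have hA2 : 2 * F2.card ≤ ∑ j ∈ F2, (S.filter fun p => p.2 = j).card := by
      calc 2 * F2.card = ∑ _j ∈ F2, 2 := by rw [Finset.sum_const, smul_eq_mul, mul_comm]
        _ ≤ _ := Finset.sum_le_sum fun j hj => h2 j hj
    have hcard : (F \ F2).card + F2.card = F.card := Finset.card_sdiff_add_card_eq_card hF2F
    omega
  have hTBM : TB.card ≤ M := by
    rw [hTBdef]
    simpa using Finset.card_filter_le (Finset.univ : Finset (Fin M)) _
  have hFM : F.card ≤ M := by omega
  have hsetF : {j | ∃ i, x i j ∈ Set.Ioo (0:ℝ) 1} = ↑F := by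
    ext j; rw [hFdef]; simp
  have hncard : ({j | ∃ i, x i j ∈ Set.Ioo (0:ℝ) 1} : Set Q).ncard ≤ M := by
    rw [hsetF, Set.ncard_coe_finset]; exact hFM
  -- Part 2
  have hsmax0 : 0 ≤ smax := by
    obtain ⟨i, j, hij⟩ := hsmax.1; rw [hij]; exact hd i j
  set x' : Fin M → Q → ℝ := fun i j => if j ∈ F then 0 else x i j with hx'def
  have hx'le : ∀ i j, x' i j ≤ x i j := by
    intro i j
    simp only [hx'def]
    split_ifs with h
    · exact (hxIcc i j).1
    · exact le_refl _
  have hx'01 : ∀ i j, x' i j = 0 ∨ x' i j = 1 := by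
    intro i j
    simp only [hx'def]
    split_ifs with h
    · exact Or.inl rfl
    · have hni : x i j ∉ Set.Ioo (0:ℝ) 1 := fun hio =>
        h (by rw [hFdef, Finset.mem_filter]; exact ⟨Finset.mem_univ _, ⟨i, hio⟩⟩)
      obtain ⟨h0, h1'⟩ := hxIcc i j
      rcases eq_or_lt_of_le h0 with he | hlt
      · exact Or.inl he.symm
      · rcases eq_or_lt_of_le h1' with he | hlt1
        · exact Or.inr he
        · exact absurd ⟨hlt, hlt1⟩ hni
  have hx'B : ∀ i, ∑ j, g i j * x' i j ≤ B i := fun i =>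
    le_trans (Finset.sum_le_sum fun j _ =>
      mul_le_mul_of_nonneg_left (hx'le i j) (hg i j)) (hxB i)
  have hx'q : ∀ j, ∑ i, x' i j ≤ 1 := fun j =>
    le_trans (Finset.sum_le_sum fun i _ => hx'le i j) (hxq j)
  have hPx' : ∑ j, ∑ i, d i j * x' i j ≤ optP := hP.2 ⟨x', hx'01, hx'B, hx'q, rfl⟩
  have hdiff : optR - (∑ j, ∑ i, d i j * x' i j) ≤ (F.card : ℝ) * smax := by
    have hterm : ∀ j, (∑ i, d i j * x i j) - (∑ i, d i j * x' i j) =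
        if j ∈ F then ∑ i, d i j * x i j else 0 := by
      intro j
      by_cases h : j ∈ F
      · rw [if_pos h]
        have hz : ∑ i, d i j * x' i j = 0 := Finset.sum_eq_zero fun i _ => by
          simp only [hx'def]; rw [if_pos h, mul_zero]
        rw [hz, sub_zero]
      · rw [if_neg h, sub_eq_zero]
        refine Finset.sum_congr rfl fun i _ => ?_
        simp only [hx'def]; rw [if_neg h]
    calc optR - ∑ j, ∑ i, d i j * x' i j
        = ∑ j, ((∑ i, d i j * x i j) - ∑ i, d i j * x' i j) := by
          rw [Finset.sum_sub_distrib, hxval]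
      _ = ∑ j ∈ F, ∑ i, d i j * x i j := by
          rw [Finset.sum_congr rfl fun j _ => hterm j, Finset.sum_ite_mem,
            Finset.univ_inter]
      _ ≤ ∑ _j ∈ F, smax := by
          refine Finset.sum_le_sum fun j hj => ?_
          calc ∑ i, d i j * x i j ≤ ∑ i, smax * x i j :=
                Finset.sum_le_sum fun i _ =>
                  mul_le_mul_of_nonneg_right (hsmax.2 ⟨i, j, rfl⟩) (hxIcc i j).1
            _ = smax * ∑ i, x i j := by rw [Finset.mul_sum]
            _ ≤ smax * 1 := mul_le_mul_of_nonneg_left (hxq j) hsmax0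
            _ = smax := mul_one smax
      _ = (F.card : ℝ) * smax := by rw [Finset.sum_const, nsmul_eq_mul]
  refine ⟨⟨x, hxIcc, hxB, hxq, hxval, hncard⟩, ?_⟩
  have hFMr : (F.card : ℝ) * smax ≤ (M : ℝ) * smax :=
    mul_le_mul_of_nonneg_right (by exact_mod_cast hFM) hsmax0
  linarith
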